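/- Let n ≥ 1 and let b₁, …, bₙ : Fin m → ℝ be monotone (nondecreasing) tuples. Define the coordinatewise mean b̄ : Fin m → ℝ by b̄ l = (∑ i, bᵢ l) / n. Then: (1) b̄ is monotone; and (2) for every tuple γ : Fin m → ℝ and every family of permutations σ₁, …, σₙ of Fin m, ∑ i, ∑ l, (γ l − bᵢ (σᵢ l))² ≥ ∑ i, ∑ l, (b̄ l − bᵢ l)². In other words, the l-th smallest value of the topological centroid of the tuples b₁, …, bₙ is the mean of their l-th smallest values. -/

import Mathlib

lemma mean_min_sq {n : ℕ} (hn : 1 ≤ n) (a : Fin n → ℝ) (c : ℝ) :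
    ∑ i, ((∑ j, a j) / (n : ℝ) - a i) ^ 2 ≤ ∑ i, (c - a i) ^ 2 := by
  have hn' : (0 : ℝ) < n := by exact_mod_cast hn
  set μ : ℝ := (∑ j, a j) / n with hμ
  have hsum : ∑ i, (μ - a i) = 0 := by
    rw [Finset.sum_sub_distrib, Finset.sum_const]
    simp [hμ, Finset.card_univ]
    field_simp
    ring
  have expand : ∑ i, (c - a i) ^ 2
      = ∑ i, (μ - a i) ^ 2 + (n : ℝ) * (c - μ) ^ 2 + 2 * (c - μ) * ∑ i, (μ - a i) := by
    rw [Finset.mul_sum]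
    rw [show ((n : ℝ) * (c - μ) ^ 2) = ∑ _i : Fin n, (c - μ)^2 by
      simp [Finset.sum_const, Finset.card_univ, mul_comm]]
    rw [← Finset.sum_add_distrib, ← Finset.sum_add_distrib]
    apply Finset.sum_congr rfl
    intro i _
    ring
  rw [expand, hsum]
  nlinarith [sq_nonneg (c - μ)]

/-- The topological centroid of monotone tuples `b 1, …, b n : Fin m → ℝ` is their
coordinatewise mean: the mean is monotone, and for every tuple `γ` and every family of
permutations `σ i`, the total matching cost from `γ` to the `b i` is at least the total
(sorted) matching cost from the coordinatewise mean to the `b i`. -/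
theorem topological_centroid_closed_form (n m : ℕ) (hn : 1 ≤ n)
    (b : Fin n → Fin m → ℝ) (hb : ∀ i, Monotone (b i)) :
    Monotone (fun l : Fin m => (∑ i, b i l) / (n : ℝ)) ∧
    ∀ (γ : Fin m → ℝ) (σ : Fin n → Equiv.Perm (Fin m)),
      ∑ i, ∑ l, ((∑ j, b j l) / (n : ℝ) - b i l) ^ 2 ≤
        ∑ i, ∑ l, (γ l - b i (σ i l)) ^ 2 := by
  have hn' : (0 : ℝ) < n := by exact_mod_cast hn
  constructor
  · intro l l' hll'
    have h1 : ∑ i, b i l ≤ ∑ i, b i l' := Finset.sum_le_sum fun i _ => hb i hll'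
    dsimp only
    gcongr
  · intro γ σ
    set g : Fin m → ℝ := γ ∘ Tuple.sort γ with hg
    have hgmono : Monotone g := Tuple.monotone_sort γ
    -- step 1: for each i, ∑ l (g l - b i l)² ≤ ∑ l (γ l - b i (σ i l))²
    have step1 : ∀ i, ∑ l, (g l - b i l) ^ 2 ≤ ∑ l, (γ l - b i (σ i l)) ^ 2 := by
      intro i
      -- reindex RHS by (σ i)⁻¹
      have hre : ∑ l, (γ l - b i (σ i l)) ^ 2 = ∑ l, (γ ((σ i)⁻¹ l) - b i l) ^ 2 := by
        rw [← Equiv.sum_comp (σ i) (fun l => (γ ((σ i)⁻¹ l) - b i l) ^ 2)]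
        simp
      rw [hre]
      -- γ ∘ (σ i)⁻¹ = g ∘ ρ where ρ = (sort γ)⁻¹ * (σ i)⁻¹ as perm
      set ρ : Equiv.Perm (Fin m) := (σ i)⁻¹.trans (Tuple.sort γ)⁻¹ with hρ
      have hcomp : ∀ l, γ ((σ i)⁻¹ l) = g (ρ l) := by
        intro l; simp [hg, hρ, Function.comp]
      have hsq : ∑ l, (γ ((σ i)⁻¹ l)) ^ 2 = ∑ l, (g l) ^ 2 := by
        simp_rw [hcomp]
        exact Equiv.sum_comp ρ (fun l => (g l) ^ 2)
      have hmono : Monovary g (b i) := hgmono.monovary (hb i)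
      have hcross : ∑ l, g (ρ l) * b i l ≤ ∑ l, g l * b i l :=
        hmono.sum_comp_perm_mul_le_sum_mul
      have expand1 : ∑ l, (γ ((σ i)⁻¹ l) - b i l) ^ 2
          = ∑ l, (g l) ^ 2 + ∑ l, (b i l) ^ 2 - 2 * ∑ l, g (ρ l) * b i l := by
        simp_rw [hcomp, sub_sq, Finset.sum_add_distrib, Finset.sum_sub_distrib,
          Finset.mul_sum]
        ring_nf
        rw [Equiv.sum_comp ρ (fun l => g l ^ 2)]
        ring
      have expand2 : ∑ l, (g l - b i l) ^ 2
          = ∑ l, (g l) ^ 2 + ∑ l, (b i l) ^ 2 - 2 * ∑ l, g l * b i l := by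
        simp_rw [sub_sq, Finset.sum_add_distrib, Finset.sum_sub_distrib, Finset.mul_sum]
        ring_nf
      rw [expand1, expand2]
      linarith
    -- step 2: pointwise, the mean minimizes
    have step2 : ∑ i, ∑ l, ((∑ j, b j l) / (n : ℝ) - b i l) ^ 2
        ≤ ∑ i, ∑ l, (g l - b i l) ^ 2 := by
      rw [Finset.sum_comm, Finset.sum_comm (s := Finset.univ) (t := Finset.univ)
        (f := fun i l => (g l - b i l) ^ 2)]
      apply Finset.sum_le_sum
      intro l _
      exact mean_min_sq hn (fun i => b i l) (g l)
    calc ∑ i, ∑ l, ((∑ j, b j l) / (n : ℝ) - b i l) ^ 2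
        ≤ ∑ i, ∑ l, (g l - b i l) ^ 2 := step2
      _ ≤ ∑ i, ∑ l, (γ l - b i (σ i l)) ^ 2 := Finset.sum_le_sum fun i _ => step1 i
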